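/- Suppose (Θ̂₁,…,Θ̂_T) is a tuple of positive definite p×p real matrices that minimizes the GFlsL objective G over all tuples of positive definite p×p real matrices. Then ∑_{t=1}^{T} Θ̂_t = ∑_{t=1}^{T} X_t X_tᵀ; in particular the GFlsL estimator preserves the aggregate sample second moment. -/

import Mathlib

open Matrix Finset

/-- Frobenius norm of a real `p × p` matrix. -/
noncomputable def frob {p : ℕ} (A : Matrix (Fin p) (Fin p) ℝ) : ℝ :=
  Real.sqrt (∑ u, ∑ v, (A u v) ^ 2)

/-- The Group Fused least-squares LASSO (GFlsL) objective, with time indices `t = 1, …, T`. -/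
noncomputable def gflsl (p T : ℕ) (X : ℕ → Fin p → ℝ) (lam : ℝ)
    (Θ : ℕ → Matrix (Fin p) (Fin p) ℝ) : ℝ :=
  (1 / (2 * (T : ℝ))) *
      ∑ t ∈ Finset.Icc 1 T,
        ((Θ t)ᵀ * Θ t - (Matrix.vecMulVec (X t) (X t))ᵀ * Θ t
          - (Θ t)ᵀ * Matrix.vecMulVec (X t) (X t)).trace
    + lam * ∑ t ∈ Finset.Icc 2 T, frob (Θ t - Θ (t - 1))


/-- A real positive definite matrix has a uniform quadratic-form lower bound. -/
lemma posdef_lb {p : ℕ} (hp : 1 ≤ p) {A : Matrix (Fin p) (Fin p) ℝ} (hA : A.PosDef) :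
    ∃ c > 0, ∀ x : Fin p → ℝ, c * (x ⬝ᵥ x) ≤ x ⬝ᵥ (A *ᵥ x) := by
  haveI : Nonempty (Fin p) := ⟨⟨0, hp⟩⟩
  set c := Finset.univ.inf' Finset.univ_nonempty hA.1.eigenvalues with hc
  have hcpos : 0 < c := by
    rw [hc, Finset.lt_inf'_iff]
    exact fun i _ => hA.eigenvalues_pos i
  refine ⟨c, hcpos, fun x => ?_⟩
  have hsd : (A - c • 1).PosSemidef := by
    have hdiag : (Matrix.diagonal (fun i => hA.1.eigenvalues i - c)).PosSemidef := by
      apply Matrix.PosSemidef.diagonal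
      intro i
      simp only [Pi.zero_apply, sub_nonneg]
      exact Finset.inf'_le _ (Finset.mem_univ i)
    have hdec : A - c • 1 =
        (hA.1.eigenvectorUnitary : Matrix (Fin p) (Fin p) ℝ) *
          Matrix.diagonal (fun i => hA.1.eigenvalues i - c) *
          (star (hA.1.eigenvectorUnitary : Matrix (Fin p) (Fin p) ℝ)) := by
      have hU : (hA.1.eigenvectorUnitary : Matrix (Fin p) (Fin p) ℝ) *
          star (hA.1.eigenvectorUnitary : Matrix (Fin p) (Fin p) ℝ) = 1 :=
        Matrix.mem_unitaryGroup_iff.mp hA.1.eigenvectorUnitary.2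
      have hdd : Matrix.diagonal (fun i => hA.1.eigenvalues i - c)
          = Matrix.diagonal (RCLike.ofReal ∘ hA.1.eigenvalues) - c • 1 := by
        simp [Matrix.diagonal_sub, Matrix.smul_eq_diagonal_mul]
      rw [hdd, Matrix.mul_sub, Matrix.sub_mul, Matrix.mul_smul, Matrix.smul_mul, mul_one,
        hU, ← Unitary.conjStarAlgAut_apply (S := ℝ), ← hA.1.spectral_theorem]
    rw [hdec]
    exact hdiag.mul_mul_conjTranspose_same _
  have h0 := hsd.dotProduct_mulVec_nonneg x
  simp only [star_trivial] at h0
  have hexp : x ⬝ᵥ ((A - c • 1) *ᵥ x) = x ⬝ᵥ (A *ᵥ x) - c * (x ⬝ᵥ x) := by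
    rw [Matrix.sub_mulVec, dotProduct_sub, Matrix.smul_mulVec, Matrix.one_mulVec,
      dotProduct_smul]
    ring_nf
  rw [hexp] at h0
  linarith

lemma quad_ub {p : ℕ} (M : Matrix (Fin p) (Fin p) ℝ) (x : Fin p → ℝ) :
    x ⬝ᵥ (M *ᵥ x) ≤ (∑ u, ∑ v, |M u v|) * (x ⬝ᵥ x) := by
  have hS : ∀ i : Fin p, x i * x i ≤ x ⬝ᵥ x := by
    intro i
    have := Finset.single_le_sum (f := fun j => x j * x j)
      (fun j _ => mul_self_nonneg (x j)) (Finset.mem_univ i)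
    simpa [dotProduct] using this
  have hS0 : 0 ≤ x ⬝ᵥ x := Finset.sum_nonneg fun j _ => mul_self_nonneg (x j)
  have hrw : x ⬝ᵥ (M *ᵥ x) = ∑ u, ∑ v, x u * (M u v * x v) := by
    simp [dotProduct, Matrix.mulVec, Finset.mul_sum]
  rw [hrw, Finset.sum_mul]
  refine Finset.sum_le_sum fun u _ => ?_
  rw [Finset.sum_mul]
  refine Finset.sum_le_sum fun v _ => ?_
  have h1 := hS u
  have h2 := hS v
  have habs : |x u * x v| ≤ x ⬝ᵥ x := by
    rw [abs_mul]
    nlinarith [abs_nonneg (x u), abs_nonneg (x v), sq_abs (x u), sq_abs (x v),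
      sq_nonneg (|x u| - |x v|)]
  calc x u * (M u v * x v) ≤ |x u * (M u v * x v)| := le_abs_self _
    _ = |M u v| * |x u * x v| := by rw [abs_mul, abs_mul, abs_mul]; ring
    _ ≤ |M u v| * (x ⬝ᵥ x) := mul_le_mul_of_nonneg_left habs (abs_nonneg _)

lemma trace_expand {p : ℕ} (A S M : Matrix (Fin p) (Fin p) ℝ) (δ : ℝ) :
    ((A - δ • M)ᵀ * (A - δ • M) - Sᵀ * (A - δ • M) - (A - δ • M)ᵀ * S).trace
      = (Aᵀ * A - Sᵀ * A - Aᵀ * S).trace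
        + δ ^ 2 * (Mᵀ * M).trace - 2 * δ * (Mᵀ * (A - S)).trace := by
  have e1 : (Aᵀ * M).trace = (Mᵀ * A).trace := by
    rw [← Matrix.trace_transpose (Aᵀ * M), Matrix.transpose_mul, Matrix.transpose_transpose]
  have e2 : (Sᵀ * M).trace = (Mᵀ * S).trace := by
    rw [← Matrix.trace_transpose (Sᵀ * M), Matrix.transpose_mul, Matrix.transpose_transpose]
  simp only [Matrix.transpose_sub, Matrix.transpose_smul, Matrix.sub_mul, Matrix.mul_sub,
    Matrix.smul_mul, Matrix.mul_smul, Matrix.trace_sub, Matrix.trace_smul, smul_smul,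
    smul_eq_mul]
  linear_combination -δ * e1 + δ * e2

/-- any minimizer of the GFlsL objective over positive definite tuples
preserves the aggregate sample second moment. -/
theorem stmt2 (p T : ℕ) (hp : 1 ≤ p) (hT : 1 ≤ T)
    (X : ℕ → Fin p → ℝ) (lam : ℝ) (hlam : 0 < lam)
    (Θhat : ℕ → Matrix (Fin p) (Fin p) ℝ)
    (hPD : ∀ t ∈ Finset.Icc 1 T, (Θhat t).PosDef)
    (hmin : ∀ Θ : ℕ → Matrix (Fin p) (Fin p) ℝ,
      (∀ t ∈ Finset.Icc 1 T, (Θ t).PosDef) →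
      gflsl p T X lam Θhat ≤ gflsl p T X lam Θ) :
    ∑ t ∈ Finset.Icc 1 T, Θhat t
      = ∑ t ∈ Finset.Icc 1 T, Matrix.vecMulVec (X t) (X t) := by
  classical
  set S : ℕ → Matrix (Fin p) (Fin p) ℝ := fun t => Matrix.vecMulVec (X t) (X t) with hSdef
  have hS : ∀ t, Matrix.vecMulVec (X t) (X t) = S t := fun t => rfl
  set M : Matrix (Fin p) (Fin p) ℝ :=
    (∑ t ∈ Finset.Icc 1 T, Θhat t) - ∑ t ∈ Finset.Icc 1 T, S t with hMdef
  suffices hM0 : M = 0 by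
    have h := hMdef ▸ hM0
    exact sub_eq_zero.mp h
  -- transpose facts
  have hΘt : ∀ t ∈ Finset.Icc 1 T, (Θhat t)ᵀ = Θhat t := by
    intro t ht
    rw [← Matrix.conjTranspose_eq_transpose_of_trivial]
    exact (hPD t ht).1
  have hSt : ∀ t, (S t)ᵀ = S t := by
    intro t
    ext u v
    simp [hSdef, Matrix.vecMulVec_apply, mul_comm]
  have hMt : Mᵀ = M := by
    rw [hMdef, Matrix.transpose_sub, Matrix.transpose_sum, Matrix.transpose_sum]
    rw [Finset.sum_congr rfl hΘt, Finset.sum_congr rfl (fun t _ => hSt t)]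
  -- constants
  set K : ℝ := ∑ u, ∑ v, |M u v| with hK
  have hK0 : (0:ℝ) ≤ K :=
    Finset.sum_nonneg fun u _ => Finset.sum_nonneg fun v _ => abs_nonneg _
  have hclb : ∀ t ∈ Finset.Icc 1 T,
      ∃ c > 0, ∀ x : Fin p → ℝ, c * (x ⬝ᵥ x) ≤ x ⬝ᵥ (Θhat t *ᵥ x) :=
    fun t ht => posdef_lb hp (hPD t ht)
  choose! c hcpos hcq using hclb
  have hne : (Finset.Icc 1 T).Nonempty := ⟨1, by simp [hT]⟩
  set cmin := (Finset.Icc 1 T).inf' hne c with hcm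
  have hcmin : 0 < cmin := by
    rw [hcm, Finset.lt_inf'_iff]
    exact fun t ht => hcpos t ht
  have hT0 : (0:ℝ) < (T:ℝ) := by exact_mod_cast hT
  set δ : ℝ := min (cmin / (K + 1)) (1 / (T : ℝ)) with hδdef
  have hδ0 : 0 < δ := lt_min (by positivity) (by positivity)
  have hδK : ∀ t ∈ Finset.Icc 1 T, δ * K < c t := by
    intro t ht
    have h1 : δ ≤ cmin / (K + 1) := min_le_left _ _
    have h2 : cmin ≤ c t := Finset.inf'_le _ ht
    have h3 : δ * (K + 1) ≤ cmin := by
      rw [← le_div_iff₀ (by linarith : (0:ℝ) < K + 1)]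
      exact h1
    nlinarith
  have hδT : δ * (T:ℝ) ≤ 1 := by
    have h1 : δ ≤ 1 / (T:ℝ) := min_le_right _ _
    rw [← le_div_iff₀ hT0]
    exact h1
  -- perturbed family
  set Θ' : ℕ → Matrix (Fin p) (Fin p) ℝ := fun t => Θhat t - δ • M with hΘ'def
  have hPD' : ∀ t ∈ Finset.Icc 1 T, (Θ' t).PosDef := by
    intro t ht
    refine Matrix.PosDef.of_dotProduct_mulVec_pos ?_ ?_
    · show (Θ' t)ᴴ = Θ' t
      rw [Matrix.conjTranspose_eq_transpose_of_trivial]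
      show (Θhat t - δ • M)ᵀ = Θhat t - δ • M
      rw [Matrix.transpose_sub, Matrix.transpose_smul, hΘt t ht, hMt]
    · intro x hx
      simp only [star_trivial]
      have hxx : 0 < x ⬝ᵥ x := by
        obtain ⟨i, hi⟩ := Function.ne_iff.mp hx
        have hi' : x i ≠ 0 := by simpa using hi
        simpa [dotProduct] using Finset.sum_pos' (fun j _ => mul_self_nonneg (x j))
          ⟨i, Finset.mem_univ i, mul_self_pos.mpr hi'⟩
      have h1 := hcq t ht x
      have h2 := quad_ub M x
      have h3 := hδK t ht
      show 0 < x ⬝ᵥ ((Θhat t - δ • M) *ᵥ x)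
      rw [Matrix.sub_mulVec, dotProduct_sub, Matrix.smul_mulVec, dotProduct_smul,
        smul_eq_mul]
      nlinarith [mul_le_mul_of_nonneg_left h2 hδ0.le, mul_lt_mul_of_pos_right h3 hxx]
  -- sums
  have hsumM : ∑ t ∈ Finset.Icc 1 T, (Θhat t - S t) = M := by
    rw [Finset.sum_sub_distrib, hMdef]
  have hsum2 : ∑ t ∈ Finset.Icc 1 T, (Mᵀ * (Θhat t - S t)).trace = (Mᵀ * M).trace := by
    rw [← Matrix.trace_sum, ← Finset.mul_sum, hsumM]
  have hcard : ((Finset.Icc 1 T).card : ℝ) = (T : ℝ) := by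
    have h : (Finset.Icc 1 T).card = T := by rw [Nat.card_Icc]; omega
    exact_mod_cast congrArg (Nat.cast : ℕ → ℝ) h
  have htr : ∑ t ∈ Finset.Icc 1 T,
        ((Θ' t)ᵀ * Θ' t - (S t)ᵀ * Θ' t - (Θ' t)ᵀ * S t).trace
      = (∑ t ∈ Finset.Icc 1 T,
          ((Θhat t)ᵀ * Θhat t - (S t)ᵀ * Θhat t - (Θhat t)ᵀ * S t).trace)
        + ((T : ℝ) * δ ^ 2 - 2 * δ) * (Mᵀ * M).trace := by
    calc ∑ t ∈ Finset.Icc 1 T,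
          ((Θ' t)ᵀ * Θ' t - (S t)ᵀ * Θ' t - (Θ' t)ᵀ * S t).trace
        = ∑ t ∈ Finset.Icc 1 T,
            (((Θhat t)ᵀ * Θhat t - (S t)ᵀ * Θhat t - (Θhat t)ᵀ * S t).trace
              + δ ^ 2 * (Mᵀ * M).trace - 2 * δ * (Mᵀ * (Θhat t - S t)).trace) :=
          Finset.sum_congr rfl fun t _ => trace_expand (Θhat t) (S t) M δ
      _ = _ := by
          rw [Finset.sum_sub_distrib, Finset.sum_add_distrib, Finset.sum_const,
            nsmul_eq_mul, ← Finset.mul_sum, hsum2, hcard]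
          ring
  have hfr : ∀ tt : ℕ, Θ' tt - Θ' (tt - 1) = Θhat tt - Θhat (tt - 1) := by
    intro tt
    show (Θhat tt - δ • M) - (Θhat (tt - 1) - δ • M) = _
    abel
  have hgf : gflsl p T X lam Θ' = gflsl p T X lam Θhat
      + (1 / (2 * (T:ℝ))) * (((T : ℝ) * δ ^ 2 - 2 * δ) * (Mᵀ * M).trace) := by
    unfold gflsl
    simp only [hS, hfr]
    rw [htr]
    ring
  have hle := hmin Θ' hPD'
  rw [hgf] at hle
  have h2T : (0:ℝ) < 1 / (2 * (T:ℝ)) := by positivity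
  have hneg : (T : ℝ) * δ ^ 2 - 2 * δ < 0 := by nlinarith
  have hqle : (Mᵀ * M).trace ≤ 0 := by
    by_contra h
    push_neg at h
    have h4 : ((T : ℝ) * δ ^ 2 - 2 * δ) * (Mᵀ * M).trace < 0 := mul_neg_of_neg_of_pos hneg h
    have h5 : (1 / (2 * (T:ℝ))) * (((T : ℝ) * δ ^ 2 - 2 * δ) * (Mᵀ * M).trace) < 0 :=
      mul_neg_of_pos_of_neg h2T h4
    linarith
  have hentries : (Mᵀ * M).trace = ∑ v, ∑ u, (M u v) ^ 2 := by
    simp [Matrix.trace, Matrix.diag, Matrix.mul_apply, Matrix.transpose_apply, sq]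
  have hq0 : ∑ v, ∑ u, (M u v) ^ 2 = 0 := by
    have hnn : (0:ℝ) ≤ ∑ v, ∑ u, (M u v) ^ 2 :=
      Finset.sum_nonneg fun v _ => Finset.sum_nonneg fun u _ => sq_nonneg _
    rw [hentries] at hqle
    linarith
  ext u v
  have h1 := (Finset.sum_eq_zero_iff_of_nonneg
    (fun v _ => Finset.sum_nonneg fun u _ => sq_nonneg (M u v))).mp hq0 v (Finset.mem_univ v)
  have h2 := (Finset.sum_eq_zero_iff_of_nonneg
    (fun u _ => sq_nonneg (M u v))).mp h1 u (Finset.mem_univ u)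
  simpa using (pow_eq_zero_iff (by norm_num : (2:ℕ) ≠ 0)).mp h2
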